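/- Let T₁, T₂ : H → H be linear, self-adjoint isometries. Then Fix(T₂ ∘ T₁) = (Fix T₁ ∩ Fix T₂) ⊕ ((Fix T₁)^⊥ ∩ (Fix T₂)^⊥), an orthogonal direct sum. -/

import Mathlib

open scoped RealInnerProductSpace

section Aux

variable {H : Type*} [NormedAddCommGroup H] [InnerProductSpace ℝ H] [CompleteSpace H]

omit [CompleteSpace H] in
lemma aux_mem_ker_sub (T : H →L[ℝ] H) (x : H) :
    x ∈ LinearMap.ker ((1 - T : H →L[ℝ] H) : H →ₗ[ℝ] H) ↔ T x = x := by
  rw [LinearMap.mem_ker]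
  simp only [ContinuousLinearMap.coe_coe, ContinuousLinearMap.sub_apply, ContinuousLinearMap.one_apply, sub_eq_zero]
  exact eq_comm

omit [CompleteSpace H] in
lemma aux_mem_ker_add (T : H →L[ℝ] H) (x : H) :
    x ∈ LinearMap.ker ((1 + T : H →L[ℝ] H) : H →ₗ[ℝ] H) ↔ T x = -x := by
  rw [LinearMap.mem_ker]
  simp only [ContinuousLinearMap.coe_coe, ContinuousLinearMap.add_apply, ContinuousLinearMap.one_apply]
  constructor
  · intro h; linear_combination (norm := module) h
  · intro h; rw [h]; abel

/-- A self-adjoint isometry is an involution. -/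
lemma aux_sq_eq_one (T : H →L[ℝ] H) (hsa : IsSelfAdjoint T)
    (hiso : ∀ x : H, ‖T x‖ = ‖x‖) (x : H) : T (T x) = x := by
  have hsym := (ContinuousLinearMap.isSelfAdjoint_iff_isSymmetric.mp hsa)
  have hinner : ∀ x y : H, ⟪T x, T y⟫ = ⟪x, y⟫ := fun x y =>
    LinearIsometry.inner_map_map ⟨T.toLinearMap, hiso⟩ x y
  apply ext_inner_right ℝ
  intro y
  calc ⟪T (T x), y⟫ = ⟪T x, T y⟫ := hsym (T x) y
    _ = ⟪x, y⟫ := hinner x y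

/-- For a self-adjoint involution, `(ker (1 - T))ᗮ = ker (1 + T)`. -/
lemma aux_orth (T : H →L[ℝ] H) (hsa : IsSelfAdjoint T)
    (hiso : ∀ x : H, ‖T x‖ = ‖x‖) :
    (LinearMap.ker ((1 - T : H →L[ℝ] H) : H →ₗ[ℝ] H))ᗮ = LinearMap.ker ((1 + T : H →L[ℝ] H) : H →ₗ[ℝ] H) := by
  have hsym := (ContinuousLinearMap.isSelfAdjoint_iff_isSymmetric.mp hsa)
  have hsq := aux_sq_eq_one T hsa hiso
  have hsub : LinearMap.ker ((1 + T : H →L[ℝ] H) : H →ₗ[ℝ] H) ≤ (LinearMap.ker ((1 - T : H →L[ℝ] H) : H →ₗ[ℝ] H))ᗮ := by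
    intro v hv
    rw [aux_mem_ker_add] at hv
    rw [Submodule.mem_orthogonal]
    intro u hu
    rw [aux_mem_ker_sub] at hu
    have h2 : ⟪T u, v⟫ = ⟪u, T v⟫ := hsym u v
    rw [hu, hv, inner_neg_right] at h2
    linarith
  apply le_antisymm
  · intro v hv
    rw [aux_mem_ker_add]
    set a : H := (2:ℝ)⁻¹ • (v + T v) with ha_def
    set b : H := (2:ℝ)⁻¹ • (v - T v) with hb_def
    have hab : v = a + b := by rw [ha_def, hb_def]; module
    have haK : a ∈ LinearMap.ker ((1 - T : H →L[ℝ] H) : H →ₗ[ℝ] H) := by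
      rw [aux_mem_ker_sub, ha_def, map_smul, map_add, hsq v]; module
    have hbK : b ∈ LinearMap.ker ((1 + T : H →L[ℝ] H) : H →ₗ[ℝ] H) := by
      rw [aux_mem_ker_add, hb_def, map_smul, map_sub, hsq v]; module
    have hva : ⟪a, v⟫ = 0 := (Submodule.mem_orthogonal _ _).mp hv a haK
    have hba : ⟪a, b⟫ = 0 := (Submodule.mem_orthogonal _ _).mp (hsub hbK) a haK
    have haa : ⟪a, a⟫ = 0 := by
      have h : ⟪a, v⟫ = ⟪a, a⟫ + ⟪a, b⟫ := by rw [hab, inner_add_right]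
      rw [hva, hba] at h; linarith
    have ha0 : a = 0 := by rwa [inner_self_eq_zero] at haa
    rw [aux_mem_ker_add] at hbK
    have hvb : v = b := by rw [hab, ha0, zero_add]
    rw [hvb]; exact hbK
  · exact hsub

end Aux

/-- For linear self-adjoint isometries `T₁, T₂`,
`Fix (T₂ ∘ T₁) = (Fix T₁ ⊓ Fix T₂) ⊕ ((Fix T₁)ᗮ ⊓ (Fix T₂)ᗮ)` (orthogonal direct sum). -/
theorem fix_comp_selfAdjoint_isometries {H : Type*} [NormedAddCommGroup H]
    [InnerProductSpace ℝ H] [CompleteSpace H] (T₁ T₂ : H →L[ℝ] H)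
    (hsa₁ : IsSelfAdjoint T₁) (hsa₂ : IsSelfAdjoint T₂)
    (hiso₁ : ∀ x : H, ‖T₁ x‖ = ‖x‖) (hiso₂ : ∀ x : H, ‖T₂ x‖ = ‖x‖) :
    LinearMap.ker ((1 - T₂ ∘L T₁ : H →L[ℝ] H) : H →ₗ[ℝ] H) =
      (LinearMap.ker ((1 - T₁ : H →L[ℝ] H) : H →ₗ[ℝ] H) ⊓ LinearMap.ker ((1 - T₂ : H →L[ℝ] H) : H →ₗ[ℝ] H)) ⊔
        ((LinearMap.ker ((1 - T₁ : H →L[ℝ] H) : H →ₗ[ℝ] H))ᗮ ⊓ (LinearMap.ker ((1 - T₂ : H →L[ℝ] H) : H →ₗ[ℝ] H))ᗮ) ∧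
    (LinearMap.ker ((1 - T₁ : H →L[ℝ] H) : H →ₗ[ℝ] H) ⊓ LinearMap.ker ((1 - T₂ : H →L[ℝ] H) : H →ₗ[ℝ] H)) ⊓
        ((LinearMap.ker ((1 - T₁ : H →L[ℝ] H) : H →ₗ[ℝ] H))ᗮ ⊓ (LinearMap.ker ((1 - T₂ : H →L[ℝ] H) : H →ₗ[ℝ] H))ᗮ) = ⊥ ∧
    ∀ u ∈ LinearMap.ker ((1 - T₁ : H →L[ℝ] H) : H →ₗ[ℝ] H) ⊓ LinearMap.ker ((1 - T₂ : H →L[ℝ] H) : H →ₗ[ℝ] H),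
      ∀ v ∈ (LinearMap.ker ((1 - T₁ : H →L[ℝ] H) : H →ₗ[ℝ] H))ᗮ ⊓ (LinearMap.ker ((1 - T₂ : H →L[ℝ] H) : H →ₗ[ℝ] H))ᗮ,
        ⟪u, v⟫ = 0 := by
  have hsq₁ := aux_sq_eq_one T₁ hsa₁ hiso₁
  have hsq₂ := aux_sq_eq_one T₂ hsa₂ hiso₂
  have horth₁ := aux_orth T₁ hsa₁ hiso₁
  have horth₂ := aux_orth T₂ hsa₂ hiso₂
  have hkc : ∀ x : H, x ∈ LinearMap.ker ((1 - T₂ ∘L T₁ : H →L[ℝ] H) : H →ₗ[ℝ] H) ↔ T₂ (T₁ x) = x := by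
    intro x
    rw [LinearMap.mem_ker]
    simp only [ContinuousLinearMap.coe_coe, ContinuousLinearMap.sub_apply, ContinuousLinearMap.one_apply,
      ContinuousLinearMap.comp_apply, sub_eq_zero]
    exact eq_comm
  refine ⟨?_, ?_, ?_⟩
  · apply le_antisymm
    · intro x hx
      rw [hkc] at hx
      have h12 : T₂ x = T₁ x := by
        conv_lhs => rw [← hx]
        rw [hsq₂]
      set a : H := (2:ℝ)⁻¹ • (x + T₁ x) with ha_def
      set b : H := (2:ℝ)⁻¹ • (x - T₁ x) with hb_def
      have hab : x = a + b := by rw [ha_def, hb_def]; module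
      rw [hab]
      apply Submodule.add_mem_sup
      · rw [Submodule.mem_inf]
        constructor
        · rw [aux_mem_ker_sub, ha_def, map_smul, map_add, hsq₁ x]; module
        · rw [aux_mem_ker_sub, ha_def, map_smul, map_add, h12, hx]; module
      · rw [horth₁, horth₂, Submodule.mem_inf]
        constructor
        · rw [aux_mem_ker_add, hb_def, map_smul, map_sub, hsq₁ x]; module
        · rw [aux_mem_ker_add, hb_def, map_smul, map_sub, h12, hx]; module
    · apply sup_le
      · intro x hx
        rw [Submodule.mem_inf, aux_mem_ker_sub, aux_mem_ker_sub] at hx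
        rw [hkc, hx.1, hx.2]
      · rw [horth₁, horth₂]
        intro x hx
        rw [Submodule.mem_inf, aux_mem_ker_add, aux_mem_ker_add] at hx
        rw [hkc, hx.1, map_neg, hx.2, neg_neg]
  · rw [eq_bot_iff]
    intro x hx
    rw [Submodule.mem_inf, Submodule.mem_inf, Submodule.mem_inf] at hx
    obtain ⟨⟨h1, _⟩, h3, _⟩ := hx
    have h := (Submodule.mem_orthogonal _ _).mp h3 x h1
    rw [Submodule.mem_bot, ← inner_self_eq_zero (𝕜 := ℝ)]
    exact h
  · intro u hu v hv
    rw [Submodule.mem_inf] at hu hv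
    have h := (Submodule.mem_orthogonal _ _).mp hv.1 u hu.1
    exact h
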